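/- The tangent cone to the cone of m×m symmetric positive semidefinite matrices at a point M of that cone equals the set of symmetric matrices N such that dᵀNd ≥ 0 for all d in the kernel of M. -/

import Mathlib

open Matrix Filter Topology
set_option maxHeartbeats 1000000

lemma abs_entry_le_sqrt_dot {m : ℕ} (v : Fin m → ℝ) (i : Fin m) :
    |v i| ≤ Real.sqrt (v ⬝ᵥ v) := by
  rw [← Real.sqrt_sq_eq_abs]
  apply Real.sqrt_le_sqrt
  rw [sq, dotProduct]
  exact Finset.single_le_sum (f := fun j => v j * v j)
    (fun j _ => mul_self_nonneg _) (Finset.mem_univ i)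

lemma dot_mulVec_abs_le {m : ℕ} (N : Matrix (Fin m) (Fin m) ℝ) (a b : Fin m → ℝ) :
    |a ⬝ᵥ N.mulVec b| ≤ (∑ i, ∑ j, |N i j|) * (Real.sqrt (a ⬝ᵥ a) * Real.sqrt (b ⬝ᵥ b)) := by
  have h1 : a ⬝ᵥ N.mulVec b = ∑ i, ∑ j, a i * (N i j * b j) := by
    simp [dotProduct, mulVec, Finset.mul_sum]
  rw [h1]
  calc |∑ i, ∑ j, a i * (N i j * b j)| ≤ ∑ i, ∑ j, |a i * (N i j * b j)| := by
        refine (Finset.abs_sum_le_sum_abs _ _).trans ?_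
        exact Finset.sum_le_sum fun i _ => Finset.abs_sum_le_sum_abs _ _
    _ ≤ ∑ i, ∑ j, |N i j| * (Real.sqrt (a ⬝ᵥ a) * Real.sqrt (b ⬝ᵥ b)) := by
        refine Finset.sum_le_sum fun i _ => Finset.sum_le_sum fun j _ => ?_
        rw [abs_mul, abs_mul]
        have hab : |a i| * |b j| ≤ Real.sqrt (a ⬝ᵥ a) * Real.sqrt (b ⬝ᵥ b) :=
          mul_le_mul (abs_entry_le_sqrt_dot a i) (abs_entry_le_sqrt_dot b j)
            (abs_nonneg _) (Real.sqrt_nonneg _)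
        nlinarith [abs_nonneg (N i j), abs_nonneg (a i), abs_nonneg (b j)]
    _ = (∑ i, ∑ j, |N i j|) * (Real.sqrt (a ⬝ᵥ a) * Real.sqrt (b ⬝ᵥ b)) := by
        rw [Finset.sum_mul]
        exact Finset.sum_congr rfl fun i _ => by rw [Finset.sum_mul]

lemma tangent_cone_psd_hard (m : ℕ) (M : Matrix (Fin m) (Fin m) ℝ) (hM : M.PosSemidef)
    (N : Matrix (Fin m) (Fin m) ℝ) (hNs : N.IsSymm)
    (hker : ∀ v : Fin m → ℝ, M.mulVec v = 0 → 0 ≤ v ⬝ᵥ N.mulVec v) :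
    ∃ (d : ℕ → Matrix (Fin m) (Fin m) ℝ) (t : ℕ → ℝ),
      (∀ k, (d k).IsSymm) ∧ (∀ k, 0 < t k) ∧
      Tendsto d atTop (𝓝 N) ∧ Tendsto t atTop (𝓝 0) ∧
      ∀ k, (M + t k • d k).PosSemidef := by
  classical
  obtain ⟨U, lam, hU1, hU2, hlam0, hspec⟩ :
      ∃ (U : Matrix (Fin m) (Fin m) ℝ) (lam : Fin m → ℝ),
        U * star U = 1 ∧ star U * U = 1 ∧ (∀ i, 0 ≤ lam i) ∧
        M = U * diagonal lam * star U :=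
    ⟨(hM.1.eigenvectorUnitary : Matrix (Fin m) (Fin m) ℝ), hM.1.eigenvalues,
      Matrix.mem_unitaryGroup_iff.mp hM.1.eigenvectorUnitary.2,
      Matrix.mem_unitaryGroup_iff'.mp hM.1.eigenvectorUnitary.2,
      hM.eigenvalues_nonneg, by simpa using hM.1.spectral_theorem⟩
  set D : (Fin m → ℝ) → Matrix (Fin m) (Fin m) ℝ := fun a => U * diagonal a * star U with hD
  have hmulD : ∀ a b, D a * D b = D fun i => a i * b i := by
    intro a b
    simp only [hD]
    calc U * diagonal a * star U * (U * diagonal b * star U)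
        = U * diagonal a * (star U * U) * (diagonal b * star U) := by
          simp only [Matrix.mul_assoc]
      _ = U * (diagonal a * diagonal b) * star U := by
          rw [hU2, Matrix.mul_one]; simp only [Matrix.mul_assoc]
      _ = U * diagonal (fun i => a i * b i) * star U := by rw [diagonal_mul_diagonal]
  have hDsymm : ∀ a, (D a).IsSymm := by
    intro a
    have hsU : star U = Uᵀ := conjTranspose_eq_transpose_of_trivial U
    simp [hD, Matrix.IsSymm, transpose_mul, hsU, Matrix.mul_assoc]
  have hquad : ∀ (a : Fin m → ℝ) (x : Fin m → ℝ),
      x ⬝ᵥ (D a).mulVec x = ∑ i, a i * ((star U).mulVec x i) ^ 2 := by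
    intro a x
    have hsU : star U = Uᵀ := conjTranspose_eq_transpose_of_trivial U
    rw [hD]
    simp only [← mulVec_mulVec]
    rw [dotProduct_mulVec, ← mulVec_transpose, ← hsU]
    simp only [mulVec_diagonal, dotProduct]
    exact Finset.sum_congr rfl fun i _ => by ring
  have hDone : D (fun _ => 1) = 1 := by
    simp only [hD, diagonal_one, Matrix.mul_one, hU1]
  have hDsub : ∀ a b, D a - D b = D fun i => a i - b i := by
    intro a b
    simp only [hD, ← diagonal_sub, Matrix.mul_sub, Matrix.sub_mul]
  -- the kernel indicator and projection
  set g : Fin m → ℝ := fun i => if lam i = 0 then 1 else 0 with hg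
  have hg01 : ∀ i, g i = 0 ∨ g i = 1 := by
    intro i; by_cases h : lam i = 0 <;> simp [hg, h]
  set P : Matrix (Fin m) (Fin m) ℝ := D g with hP
  have hPsymm : P.IsSymm := hDsymm g
  have hMP : M * P = 0 := by
    rw [hspec, hP]
    show D lam * D g = 0
    rw [hmulD]
    have : (fun i => lam i * g i) = fun _ => (0:ℝ) := by
      funext i; by_cases h : lam i = 0 <;> simp [hg, h]
    rw [this]
    simp [hD]
  -- the spectral gap
  set f : Fin m → ℝ := fun i => if lam i = 0 then 1 else lam i with hf
  set ε : ℝ := (insert (1:ℝ) (Finset.image f Finset.univ)).min' (by simp) with hε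
  have hεpos : 0 < ε := by
    have hmem := (insert (1:ℝ) (Finset.image f Finset.univ)).min'_mem (by simp)
    rw [← hε] at hmem
    rcases Finset.mem_insert.mp hmem with h | h
    · rw [h]; norm_num
    · obtain ⟨i, _, hi⟩ := Finset.mem_image.mp h
      rw [← hi, hf]
      by_cases h0 : lam i = 0
      · simp [h0]
      · simpa [h0] using lt_of_le_of_ne (hlam0 i) (Ne.symm h0)
  have hεle : ∀ i, lam i ≠ 0 → ε ≤ lam i := by
    intro i h0
    have : f i ∈ insert (1:ℝ) (Finset.image f Finset.univ) :=
      Finset.mem_insert_of_mem (Finset.mem_image_of_mem f (Finset.mem_univ i))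
    have := Finset.min'_le _ _ this
    rw [← hε] at this
    simpa [hf, h0] using this
  -- norm bound for N
  set K : ℝ := ∑ i, ∑ j, |N i j| with hK
  have hK0 : 0 ≤ K := Finset.sum_nonneg fun i _ => Finset.sum_nonneg fun j _ => abs_nonneg _
  set c : ℝ := K + K ^ 2 + 1 with hc
  have hc0 : 0 < c := by rw [hc]; have := sq_nonneg K; linarith
  set t₀ : ℝ := min 1 ((ε / c) ^ 2) with ht₀def
  have ht₀ : 0 < t₀ := lt_min one_pos (pow_pos (div_pos hεpos hc0) 2)
  -- the key PSD fact
  have key : ∀ t : ℝ, 0 < t → t ≤ t₀ → (M + t • (N + Real.sqrt t • P)).PosSemidef := by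
    intro t ht htle
    set s : ℝ := Real.sqrt t with hs
    have hs0 : 0 < s := Real.sqrt_pos.mpr ht
    have hst : s ^ 2 = t := Real.sq_sqrt ht.le
    have hs1 : s ≤ 1 := by
      rw [hs]
      have : t ≤ 1 := htle.trans (min_le_left _ _)
      simpa using Real.sqrt_le_sqrt this
    have hts : t ≤ s := by
      rw [← hst, sq]
      exact mul_le_of_le_one_right hs0.le hs1
    have hεb : s * c ≤ ε := by
      have h1 : s ≤ ε / c := by
        have h2 : t ≤ (ε / c) ^ 2 := htle.trans (min_le_right _ _)
        calc s = Real.sqrt t := hs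
          _ ≤ Real.sqrt ((ε / c) ^ 2) := Real.sqrt_le_sqrt h2
          _ = ε / c := Real.sqrt_sq (by positivity)
      calc s * c ≤ (ε / c) * c := mul_le_mul_of_nonneg_right h1 hc0.le
        _ = ε := by field_simp
    refine posSemidef_iff_dotProduct_mulVec.mpr ⟨?_, ?_⟩
    · -- Hermitian
      have hsymm : (M + t • (N + s • P)).IsSymm := by
        have hMs : M.IsSymm := by
          have := hM.1
          rwa [Matrix.IsHermitian, conjTranspose_eq_transpose_of_trivial] at this
        simp only [Matrix.IsSymm, transpose_add, transpose_smul] at *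
        rw [hMs, hNs, hPsymm]
      rwa [Matrix.IsHermitian, conjTranspose_eq_transpose_of_trivial]
    · intro x
      rw [star_trivial]
      set y : Fin m → ℝ := (star U).mulVec x with hy
      set u : Fin m → ℝ := P.mulVec x with hu
      set w : Fin m → ℝ := x - u with hw
      have hxuw : x = u + w := by rw [hw]; ring
      set Su : ℝ := ∑ i, g i * y i ^ 2 with hSu
      set Sw : ℝ := ∑ i, (1 - g i) * y i ^ 2 with hSw
      have hgnn : ∀ i, 0 ≤ g i := fun i => by
        rcases hg01 i with h | h <;> rw [h] <;> norm_num
      have hgle1 : ∀ i, g i ≤ 1 := fun i => by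
        rcases hg01 i with h | h <;> rw [h] <;> norm_num
      have hSu0 : 0 ≤ Su :=
        Finset.sum_nonneg fun i _ => mul_nonneg (hgnn i) (sq_nonneg _)
      have hSw0 : 0 ≤ Sw :=
        Finset.sum_nonneg fun i _ => mul_nonneg (by linarith [hgle1 i]) (sq_nonneg _)
      -- symmetric vecMul
      have hvec : ∀ a v, Matrix.vecMul v (D a) = (D a).mulVec v := by
        intro a v
        conv_lhs => rw [show D a = (D a)ᵀ from (hDsymm a).symm]
        rw [vecMul_transpose]
      have hdot2 : ∀ a : Fin m → ℝ,
          ((D a).mulVec x) ⬝ᵥ ((D a).mulVec x) = ∑ i, (a i * a i) * y i ^ 2 := by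
        intro a
        calc ((D a).mulVec x) ⬝ᵥ ((D a).mulVec x)
            = Matrix.vecMul ((D a).mulVec x) (D a) ⬝ᵥ x := by rw [dotProduct_mulVec]
          _ = ((D a).mulVec ((D a).mulVec x)) ⬝ᵥ x := by rw [hvec]
          _ = ((D a * D a).mulVec x) ⬝ᵥ x := by rw [mulVec_mulVec]
          _ = x ⬝ᵥ ((D fun i => a i * a i).mulVec x) := by rw [hmulD, dotProduct_comm]
          _ = ∑ i, (a i * a i) * y i ^ 2 := hquad _ x
      have huu : u ⬝ᵥ u = Su := by
        rw [hu, hP, hdot2 g, hSu]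
        exact Finset.sum_congr rfl fun i _ => by rcases hg01 i with h | h <;> simp [h]
      have hwD : w = (D fun i => 1 - g i).mulVec x := by
        rw [hw, hu, hP, ← hDsub]
        rw [sub_mulVec, hDone, one_mulVec]
      have hww : w ⬝ᵥ w = Sw := by
        rw [hwD, hdot2, hSw]
        exact Finset.sum_congr rfl fun i _ => by rcases hg01 i with h | h <;> simp [h] <;> ring
      have hMu : M.mulVec u = 0 := by
        rw [hu, mulVec_mulVec, hMP, zero_mulVec]
      have hNu : 0 ≤ u ⬝ᵥ N.mulVec u := hker u hMu
      have hPx : x ⬝ᵥ P.mulVec x = Su := by rw [hP, hquad g x]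
      set α : ℝ := Real.sqrt Su with hα
      set β : ℝ := Real.sqrt Sw with hβ
      have hα0 : 0 ≤ α := Real.sqrt_nonneg _
      have hβ0 : 0 ≤ β := Real.sqrt_nonneg _
      have hα2 : α ^ 2 = Su := Real.sq_sqrt hSu0
      have hβ2 : β ^ 2 = Sw := Real.sq_sqrt hSw0
      -- lower bound for x M x
      have hMlow : ε * β ^ 2 ≤ x ⬝ᵥ M.mulVec x := by
        have hMq : x ⬝ᵥ M.mulVec x = ∑ i, lam i * y i ^ 2 := by
          rw [hspec]; exact hquad lam x
        rw [hMq, hβ2, hSw, Finset.mul_sum]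
        refine Finset.sum_le_sum fun i _ => ?_
        by_cases h0 : lam i = 0
        · simp [hg, h0]
        · have h1 : g i = 0 := by simp [hg, h0]
          have h2 : ε ≤ lam i := hεle i h0
          rw [h1]
          calc ε * ((1 - 0) * y i ^ 2) = ε * y i ^ 2 := by ring
            _ ≤ lam i * y i ^ 2 := mul_le_mul_of_nonneg_right h2 (sq_nonneg _)
      -- lower bound for x N x
      have hb1 : |u ⬝ᵥ N.mulVec w| ≤ K * (α * β) := by
        have := dot_mulVec_abs_le N u w
        rwa [huu, hww, ← hK, ← hα, ← hβ] at this
      have hb2 : |w ⬝ᵥ N.mulVec u| ≤ K * (β * α) := by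
        have := dot_mulVec_abs_le N w u
        rwa [hww, huu, ← hK, ← hα, ← hβ] at this
      have hb3 : |w ⬝ᵥ N.mulVec w| ≤ K * (β * β) := by
        have := dot_mulVec_abs_le N w w
        rwa [hww, ← hK, ← hβ] at this
      have hNdec : x ⬝ᵥ N.mulVec x =
          u ⬝ᵥ N.mulVec u + u ⬝ᵥ N.mulVec w + w ⬝ᵥ N.mulVec u + w ⬝ᵥ N.mulVec w := by
        rw [hxuw, mulVec_add, add_dotProduct, dotProduct_add, dotProduct_add]
        ring
      have hNlow : -(2 * K * (α * β)) - K * β ^ 2 ≤ x ⬝ᵥ N.mulVec x := by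
        rw [hNdec]
        have l1 := neg_abs_le (u ⬝ᵥ N.mulVec w)
        have l2 := neg_abs_le (w ⬝ᵥ N.mulVec u)
        have l3 := neg_abs_le (w ⬝ᵥ N.mulVec w)
        have hsq : β * β = β ^ 2 := (sq β).symm
        linarith [hb1, hb2, hb3, hNu]
      -- expand the quadratic form
      have hexp : x ⬝ᵥ (M + t • (N + s • P)).mulVec x =
          x ⬝ᵥ M.mulVec x + t * (x ⬝ᵥ N.mulVec x) + t * s * Su := by
        simp only [add_mulVec, smul_mulVec, dotProduct_add, dotProduct_smul,
          smul_eq_mul, hPx]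
        ring
      rw [hexp, ← hα2]
      -- final arithmetic
      have e1 : 0 ≤ t * s * α ^ 2 - 2 * t * K * (α * β) + s * K ^ 2 * β ^ 2 := by
        have h := mul_nonneg hs0.le (sq_nonneg (s * α - K * β))
        have heq : t * s * α ^ 2 - 2 * t * K * (α * β) + s * K ^ 2 * β ^ 2
            = s * (s * α - K * β) ^ 2 := by rw [← hst]; ring
        rw [heq]; exact h
      have hfin : 0 ≤ ε - t * K - s * K ^ 2 := by
        have hsc : s * c = s * K + s * K ^ 2 + s := by rw [hc]; ring
        have htK : t * K ≤ s * K := mul_le_mul_of_nonneg_right hts hK0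
        linarith [hεb, hsc, htK, hs0.le]
      have hfin2 : 0 ≤ ε * β ^ 2 - t * K * β ^ 2 - s * K ^ 2 * β ^ 2 := by
        have h := mul_nonneg hfin (sq_nonneg β)
        have heq : ε * β ^ 2 - t * K * β ^ 2 - s * K ^ 2 * β ^ 2
            = (ε - t * K - s * K ^ 2) * β ^ 2 := by ring
        rw [heq]; exact h
      have h5 : t * (-(2 * K * (α * β)) - K * β ^ 2) ≤ t * (x ⬝ᵥ N.mulVec x) :=
        mul_le_mul_of_nonneg_left hNlow ht.le
      linarith [hMlow, h5, e1, hfin2]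
  -- build the sequence
  refine ⟨fun k => N + Real.sqrt (t₀ / (k + 1)) • P, fun k => t₀ / (k + 1), ?_, ?_, ?_, ?_, ?_⟩
  · intro k
    simp only [Matrix.IsSymm, transpose_add, transpose_smul]
    rw [hNs, hPsymm]
  · intro k
    exact div_pos ht₀ (by positivity)
  · have h1 : Tendsto (fun k : ℕ => t₀ / (k + 1)) atTop (𝓝 0) := by
      have := tendsto_one_div_add_atTop_nhds_zero_nat.const_mul t₀
      simpa [div_eq_mul_inv, mul_comm] using this
    have h2 : Tendsto (fun k : ℕ => Real.sqrt (t₀ / (k + 1))) atTop (𝓝 0) := by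
      have := (Real.continuous_sqrt.tendsto 0).comp h1
      simpa [Function.comp_def] using this
    have h3 : Tendsto (fun k : ℕ => Real.sqrt (t₀ / (k + 1)) • P) atTop (𝓝 ((0:ℝ) • P)) :=
      h2.smul_const P
    have := tendsto_const_nhds (x := N) (f := atTop (α := ℕ)) |>.add h3
    simpa using this
  · have := tendsto_one_div_add_atTop_nhds_zero_nat.const_mul t₀
    simpa [div_eq_mul_inv, mul_comm] using this
  · intro k
    refine key _ (div_pos ht₀ (by positivity)) ?_
    apply div_le_self ht₀.le
    have h0 : (0:ℝ) ≤ (k:ℝ) := Nat.cast_nonneg k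
    linarith

/-- The (Bouligand) tangent cone to the PSD cone at `M ∈ S^m_+`, computed within the
space of symmetric matrices, equals `{N ∈ S^m : dᵀ N d ≥ 0 for all d ∈ Ker M}`. -/
theorem tangent_cone_psd (m : ℕ) (M : Matrix (Fin m) (Fin m) ℝ) (hM : M.PosSemidef) :
    {N : Matrix (Fin m) (Fin m) ℝ |
      ∃ (d : ℕ → Matrix (Fin m) (Fin m) ℝ) (t : ℕ → ℝ),
        (∀ k, (d k).IsSymm) ∧ (∀ k, 0 < t k) ∧
        Tendsto d atTop (𝓝 N) ∧ Tendsto t atTop (𝓝 0) ∧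
        ∀ k, (M + t k • d k).PosSemidef} =
    {N : Matrix (Fin m) (Fin m) ℝ |
      N.IsSymm ∧ ∀ v : Fin m → ℝ, M.mulVec v = 0 → 0 ≤ v ⬝ᵥ N.mulVec v} := by
  ext N
  simp only [Set.mem_setOf_eq]
  constructor
  · rintro ⟨d, t, hdsym, htpos, hdlim, htlim, hpsd⟩
    have hent : ∀ i j, Tendsto (fun k => d k i j) atTop (𝓝 (N i j)) := by
      intro i j
      have hc : Continuous (fun A : Matrix (Fin m) (Fin m) ℝ => A i j) :=
        (continuous_apply j).comp (continuous_apply i)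
      exact (hc.tendsto N).comp hdlim
    constructor
    · refine IsSymm.ext fun i j => ?_
      have h1 : Tendsto (fun k => d k i j) atTop (𝓝 (N i j)) := hent i j
      have h2 : Tendsto (fun k => d k i j) atTop (𝓝 (N j i)) := by
        have he : (fun k => d k i j) = fun k => d k j i := funext fun k => (hdsym k).apply j i
        rw [he]; exact hent j i
      exact tendsto_nhds_unique h2 h1
    · intro v hv
      have hcont : Continuous (fun A : Matrix (Fin m) (Fin m) ℝ => v ⬝ᵥ A.mulVec v) := by
        unfold dotProduct mulVec
        refine continuous_finset_sum _ fun i _ => Continuous.mul continuous_const ?_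
        exact continuous_finset_sum _ fun j _ => by
          fun_prop
      have hlim : Tendsto (fun k => v ⬝ᵥ (d k).mulVec v) atTop (𝓝 (v ⬝ᵥ N.mulVec v)) :=
        (hcont.tendsto N).comp hdlim
      refine ge_of_tendsto hlim (Eventually.of_forall fun k => ?_)
      have h := (hpsd k).dotProduct_mulVec_nonneg v
      rw [add_mulVec, dotProduct_add, hv] at h
      simp only [smul_mulVec, dotProduct_smul, smul_eq_mul, star_trivial] at h
      have h0 : 0 ≤ t k * (v ⬝ᵥ (d k).mulVec v) := by simpa [dotProduct] using h
      exact nonneg_of_mul_nonneg_right h0 (htpos k)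
  · rintro ⟨hNs, hker⟩
    exact tangent_cone_psd_hard m M hM N hNs hker
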